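/- Let a ∈ F_q[T][t_1,…,t_n] be monic as a polynomial in T, where v(T) = −1 in C_F. Then there exists a rational r < 0 such that 1/a lies in T_{n,r}, i.e. 1/a = ∑_i c_i t^i with v(c_i) + r|i| → ∞; concretely, writing a = T^k + b with v(b) > −k and b of total degree ≤ dg in the t-variables, any r with −1/dg < r < 0 works, via the geometric series 1/a = ∑_{m≥0} (−1)^m b^m / T^{k(m+1)}. -/

import Mathlib

open Filter

lemma stmt15_deg_tendsto (n : ℕ) :
    Filter.Tendsto (fun m : Fin n →₀ ℕ => ∑ j, m j) Filter.cofinite Filter.atTop := by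
  rw [Filter.tendsto_atTop]
  intro N
  rw [Filter.eventually_cofinite]
  have hsub : {m : Fin n →₀ ℕ | ¬ N ≤ ∑ j, m j} ⊆
      Set.Iic (Finsupp.equivFunOnFinite.symm fun _ => N) := by
    intro m hm
    simp only [Set.mem_setOf_eq, not_le] at hm
    intro j
    have : m j ≤ ∑ i, m i := Finset.single_le_sum (fun i _ => Nat.zero_le _) (Finset.mem_univ j)
    simpa using this.trans hm.le
  exact (Set.finite_Iic _).subset hsub

/-- If `a = T^k + b` is a polynomial in `t_1,…,t_n` over `C_F` which is monic in `T`
(`‖T‖ > 1` encodes `v(T) = −1`, and `‖b‖ < ‖T‖^k` encodes `v(b) > −k`, the Gauss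
valuation being the max of coefficient norms), then `1/a` lies in `T_{n,r}` for some
`r < 0`: there are `B > 1` (`B = e^{−r}`) and a power series inverse `g` of `a` with
`‖coeff_m g‖·B^{|m|} → 0`. -/
theorem stmt15 (C_F : Type*) [NontriviallyNormedField C_F] [IsUltrametricDist C_F]
    (n : ℕ) (T : C_F) (hT : 1 < ‖T‖)
    (k : ℕ) (hk : 1 ≤ k)
    (b : MvPolynomial (Fin n) C_F)
    (hb : ∀ m : Fin n →₀ ℕ, ‖MvPolynomial.coeff m b‖ < ‖T‖ ^ k)
    (a : MvPolynomial (Fin n) C_F) (ha : a = MvPolynomial.C (T ^ k) + b) :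
    ∃ B : ℝ, 1 < B ∧ ∃ g : MvPowerSeries (Fin n) C_F,
      (↑a : MvPowerSeries (Fin n) C_F) * g = 1 ∧
      Filter.Tendsto (fun m : Fin n →₀ ℕ => ‖MvPowerSeries.coeff m g‖ * B ^ (∑ j, m j))
        Filter.cofinite (nhds 0) := by
  classical
  -- nnnorm versions of hypotheses
  set Tk : NNReal := ‖T‖₊ ^ k with hTk_def
  have hTk_pos : 0 < Tk := by
    have h0 : (0:NNReal) < ‖T‖₊ := by
      rw [← NNReal.coe_lt_coe]
      push_cast
      linarith
    exact pow_pos h0 k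
  have hb' : ∀ m : Fin n →₀ ℕ, ‖MvPolynomial.coeff m b‖₊ < Tk := by
    intro m
    have := hb m
    rw [← NNReal.coe_lt_coe]
    push_cast
    simpa [hTk_def] using this
  -- the constant coefficient of `a`
  have ha0norm : ‖MvPolynomial.coeff 0 a‖₊ = Tk := by
    rw [ha]
    have h1 : MvPolynomial.coeff (0 : Fin n →₀ ℕ) (MvPolynomial.C (T ^ k) + b)
        = T ^ k + MvPolynomial.coeff 0 b := by
      rw [MvPolynomial.coeff_add, MvPolynomial.coeff_C, if_pos rfl]
    rw [h1]
    have hne : ‖T ^ k‖₊ ≠ ‖MvPolynomial.coeff (0 : Fin n →₀ ℕ) b‖₊ := by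
      have := hb' 0
      rw [nnnorm_pow]
      exact fun h => absurd (h ▸ this) (lt_irrefl _)
    rw [IsUltrametricDist.nnnorm_add_eq_max_of_nnnorm_ne_nnnorm hne, nnnorm_pow]
    exact max_eq_left (le_of_lt (by simpa [nnnorm_pow] using hb' 0))
  have ha0 : MvPolynomial.coeff 0 a ≠ 0 := by
    intro h
    rw [h] at ha0norm
    simp at ha0norm
    exact hTk_pos.ne' ha0norm.symm
  -- the inverse power series
  set u : C_Fˣ := Units.mk0 _ ha0 with hu
  set g : MvPowerSeries (Fin n) C_F := MvPowerSeries.invOfUnit (↑a) u with hgdef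
  have hconst : MvPowerSeries.constantCoeff (↑a : MvPowerSeries (Fin n) C_F) = ↑u := by
    simp [hu, ← MvPolynomial.coeff_coe]
  have hg : (↑a : MvPowerSeries (Fin n) C_F) * g = 1 :=
    MvPowerSeries.mul_invOfUnit _ u hconst
  -- set up ρ
  set D : ℕ := b.totalDegree with hD
  set M : NNReal := b.support.sup fun j => ‖MvPolynomial.coeff j b‖₊ with hM
  have hMlt : M < Tk := by
    rcases b.support.eq_empty_or_nonempty with h | h
    · rw [hM, h]; simpa using hTk_pos
    · rw [hM, Finset.sup_lt_iff (by simpa using hTk_pos)]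
      exact fun j _ => hb' j
  set r : NNReal := max (1/2) (M / Tk) with hrdef
  have hr1 : r < 1 := by
    apply max_lt (by rw [← NNReal.coe_lt_coe]; norm_num)
    rw [div_lt_one hTk_pos]
    exact hMlt
  have hr0 : 0 < r := lt_of_lt_of_le (by norm_num) (le_max_left _ _)
  set ρ : NNReal := r ^ ((D + 1 : ℝ)⁻¹) with hρdef
  have hρ1 : ρ < 1 := NNReal.rpow_lt_one hr1 (by positivity)
  have hρ0 : 0 < ρ := by
    rw [hρdef]
    exact NNReal.rpow_pos hr0
  have hρr : ρ ^ (D + 1) = r := by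
    rw [hρdef, ← NNReal.rpow_natCast (r ^ ((D + 1 : ℝ)⁻¹)) (D+1), ← NNReal.rpow_mul]
    push_cast
    rw [inv_mul_cancel₀ (by positivity), NNReal.rpow_one]
  -- coefficient bound for b
  have hbρ : ∀ m : Fin n →₀ ℕ, ‖MvPolynomial.coeff m b‖₊ ≤ Tk * ρ ^ (∑ j, m j) := by
    intro m
    by_cases hmem : m ∈ b.support
    · have hdeg : (∑ j, m j) ≤ D := by
        have h1 : (m.sum fun _ e => e) ≤ D := MvPolynomial.le_totalDegree hmem
        have h2 : (∑ j, m j) = m.sum fun _ e => e := by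
          rw [Finsupp.sum_fintype]
          intro; rfl
        omega
      have h3 : ‖MvPolynomial.coeff m b‖₊ ≤ r * Tk := by
        have h4 : ‖MvPolynomial.coeff m b‖₊ ≤ M := Finset.le_sup (f := fun j => ‖MvPolynomial.coeff j b‖₊) hmem
        have h5 : M ≤ r * Tk := by
          have : M / Tk ≤ r := le_max_right _ _
          calc M = M / Tk * Tk := by rw [div_mul_cancel₀ _ hTk_pos.ne']
          _ ≤ r * Tk := mul_le_mul_left this _
        exact h4.trans h5
      have h6 : r ≤ ρ ^ (∑ j, m j) := by
        rw [← hρr]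
        exact pow_le_pow_of_le_one zero_le hρ1.le (by omega)
      calc ‖MvPolynomial.coeff m b‖₊ ≤ r * Tk := h3
      _ ≤ ρ ^ (∑ j, m j) * Tk := mul_le_mul_left h6 _
      _ = Tk * ρ ^ (∑ j, m j) := mul_comm _ _
    · rw [MvPolynomial.notMem_support_iff] at hmem
      simp [hmem]
  -- main induction
  have key : ∀ N : ℕ, ∀ m : Fin n →₀ ℕ, (∑ j, m j) = N →
      Tk * ‖MvPowerSeries.coeff m g‖₊ ≤ ρ ^ N := by
    intro N
    induction N using Nat.strong_induction_on with
    | _ N IH =>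
      intro m hm
      by_cases hm0 : m = 0
      · subst hm0
        simp only [Finsupp.coe_zero, Pi.zero_apply, Finset.sum_const_zero] at hm
        subst hm
        have h0 : MvPolynomial.coeff 0 a * MvPowerSeries.coeff 0 g = 1 := by
          have := congrArg (MvPowerSeries.coeff 0) hg
          rwa [MvPowerSeries.coeff_mul, Finsupp.antidiagonal_zero, Finset.sum_singleton,
            MvPolynomial.coeff_coe, MvPowerSeries.coeff_zero_one] at this
        have := congrArg (‖·‖₊) h0
        simp only [nnnorm_mul, nnnorm_one, ha0norm] at this
        rw [pow_zero]
        exact le_of_eq this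
      · -- recursion
        have hcoeff : ∑ p ∈ Finset.HasAntidiagonal.antidiagonal m,
            MvPolynomial.coeff p.1 a * MvPowerSeries.coeff p.2 g = 0 := by
          have := congrArg (MvPowerSeries.coeff m) hg
          rwa [MvPowerSeries.coeff_mul, MvPowerSeries.coeff_one, if_neg hm0] at this
        have hmem : ((0 : Fin n →₀ ℕ), m) ∈ Finset.HasAntidiagonal.antidiagonal m := by
          rw [Finset.HasAntidiagonal.mem_antidiagonal]; simp
        rw [← Finset.add_sum_erase _ _ hmem] at hcoeff
        have heq : MvPolynomial.coeff 0 a * MvPowerSeries.coeff m g =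
            -∑ p ∈ (Finset.HasAntidiagonal.antidiagonal m).erase (0, m),
              MvPolynomial.coeff p.1 a * MvPowerSeries.coeff p.2 g :=
          eq_neg_of_add_eq_zero_left hcoeff
        have hnorm : Tk * ‖MvPowerSeries.coeff m g‖₊ =
            ‖∑ p ∈ (Finset.HasAntidiagonal.antidiagonal m).erase (0, m),
              MvPolynomial.coeff p.1 a * MvPowerSeries.coeff p.2 g‖₊ := by
          rw [← ha0norm, ← nnnorm_mul, heq, nnnorm_neg]
        rw [hnorm]
        apply IsUltrametricDist.nnnorm_sum_le_of_forall_le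
        intro p hp
        rw [Finset.mem_erase, Finset.HasAntidiagonal.mem_antidiagonal] at hp
        obtain ⟨hpne, hpsum⟩ := hp
        have hp1 : p.1 ≠ 0 := by
          intro h
          apply hpne
          have : p.2 = m := by rw [← hpsum, h, zero_add]
          exact Prod.ext h this
        have hdeg : (∑ j, p.1 j) + (∑ j, p.2 j) = N := by
          rw [← hm, ← Finset.sum_add_distrib]
          congr 1
          ext j
          rw [← hpsum]
          simp
        have hp1pos : 0 < ∑ j, p.1 j := by
          rcases Finsupp.ne_iff.mp hp1 with ⟨j, hj⟩
          simp only [Finsupp.coe_zero, Pi.zero_apply] at hj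
          exact Finset.sum_pos' (fun i _ => Nat.zero_le _)
            ⟨j, Finset.mem_univ j, Nat.pos_of_ne_zero hj⟩
        have hIH : Tk * ‖MvPowerSeries.coeff p.2 g‖₊ ≤ ρ ^ (∑ j, p.2 j) :=
          IH (∑ j, p.2 j) (by omega) p.2 rfl
        have hcoeffa : MvPolynomial.coeff p.1 a = MvPolynomial.coeff p.1 b := by
          rw [ha, MvPolynomial.coeff_add, MvPolynomial.coeff_C, if_neg (by
            intro h; exact hp1 h.symm), zero_add]
        rw [nnnorm_mul, hcoeffa]
        calc ‖MvPolynomial.coeff p.1 b‖₊ * ‖MvPowerSeries.coeff p.2 g‖₊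
            ≤ (Tk * ρ ^ (∑ j, p.1 j)) * ‖MvPowerSeries.coeff p.2 g‖₊ :=
              mul_le_mul_left (hbρ p.1) _
          _ = ρ ^ (∑ j, p.1 j) * (Tk * ‖MvPowerSeries.coeff p.2 g‖₊) := by ring
          _ ≤ ρ ^ (∑ j, p.1 j) * ρ ^ (∑ j, p.2 j) := mul_le_mul_right hIH _
          _ = ρ ^ N := by rw [← pow_add, hdeg]
  -- choose B
  have hρ1' : (ρ : ℝ) < 1 := hρ1
  have hρ0' : (0 : ℝ) < ρ := hρ0
  set B : ℝ := (1 + (ρ : ℝ)⁻¹) / 2 with hBdef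
  have hBinv : 1 < (ρ : ℝ)⁻¹ := (one_lt_inv₀ hρ0').mpr hρ1'
  have hB1 : 1 < B := by rw [hBdef]; linarith
  have hρB : (ρ : ℝ) * B < 1 := by
    rw [hBdef]
    have : (ρ : ℝ) * ((1 + (ρ:ℝ)⁻¹) / 2) = ((ρ:ℝ) + (ρ:ℝ) * (ρ:ℝ)⁻¹) / 2 := by ring
    rw [this, mul_inv_cancel₀ hρ0'.ne']
    linarith
  have hρB0 : 0 ≤ (ρ : ℝ) * B := by positivity
  refine ⟨B, hB1, g, hg, ?_⟩
  -- the squeeze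
  have hTk' : (0 : ℝ) < (Tk : ℝ) := hTk_pos
  have hbound : ∀ m : Fin n →₀ ℕ,
      ‖MvPowerSeries.coeff m g‖ * B ^ (∑ j, m j) ≤ ((ρ:ℝ) * B) ^ (∑ j, m j) / Tk := by
    intro m
    have h1 : (Tk : ℝ) * ‖MvPowerSeries.coeff m g‖ ≤ (ρ:ℝ) ^ (∑ j, m j) := by
      have := key (∑ j, m j) m rfl
      rw [← NNReal.coe_le_coe] at this
      push_cast at this
      simpa [coe_nnnorm] using this
    have h2 : ‖MvPowerSeries.coeff m g‖ ≤ (ρ:ℝ) ^ (∑ j, m j) / Tk := by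
      rw [le_div_iff₀ hTk']
      linarith [h1]
    calc ‖MvPowerSeries.coeff m g‖ * B ^ (∑ j, m j)
        ≤ ((ρ:ℝ) ^ (∑ j, m j) / Tk) * B ^ (∑ j, m j) :=
          mul_le_mul_of_nonneg_right h2 (by positivity)
      _ = ((ρ:ℝ) * B) ^ (∑ j, m j) / Tk := by rw [mul_pow]; ring
  have hlim : Filter.Tendsto (fun m : Fin n →₀ ℕ => ((ρ:ℝ) * B) ^ (∑ j, m j) / Tk)
      Filter.cofinite (nhds 0) := by
    have h1 : Filter.Tendsto (fun N : ℕ => ((ρ:ℝ) * B) ^ N / Tk) Filter.atTop (nhds 0) := by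
      have := (tendsto_pow_atTop_nhds_zero_of_lt_one hρB0 hρB).div_const (Tk : ℝ)
      simpa using this
    exact h1.comp (stmt15_deg_tendsto n)
  apply squeeze_zero (fun m => by positivity) hbound hlim
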